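/- arXiv:2401.04869 — 4 statements merged into one kernel-verified Lean document; each statement's English description precedes it below -/
import Mathlib

section
/- Let f ∈ ℂ[z, z̄] be a polynomial in z and z̄. If f(ξ, ξ̄) = 0 for infinitely many ξ on the unit circle 𝕋 = {z : |z| = 1}, then there exists a polynomial g ∈ ℂ[z, z̄] such that f(z, z̄) = (1 − |z|²) g(z, z̄) for all z ∈ ℂ. In particular, f vanishes on all of 𝕋. -/
open MvPolynomial ComplexConjugate

private lemma mono_div (i j : ℕ) : ∃ q : MvPolynomial (Fin 2) ℂ,
    (MvPolynomial.X 0 : MvPolynomial (Fin 2) ℂ) ^ i * MvPolynomial.X 1 ^ j =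
      (MvPolynomial.X 0 * MvPolynomial.X 1 - 1) * q +
        (if j ≤ i then (MvPolynomial.X 0 : MvPolynomial (Fin 2) ℂ) ^ (i - j)
          else MvPolynomial.X 1 ^ (j - i)) := by
  by_cases hji : j ≤ i
  · refine ⟨MvPolynomial.X 0 ^ (i - j) *
      ∑ k ∈ Finset.range j, (MvPolynomial.X 0 * MvPolynomial.X 1) ^ k, ?_⟩
    rw [if_pos hji]
    have key := geom_sum_mul ((MvPolynomial.X 0 : MvPolynomial (Fin 2) ℂ) * MvPolynomial.X 1) j
    conv_lhs => rw [show i = i - j + j from (Nat.sub_add_cancel hji).symm, pow_add]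
    linear_combination (-((MvPolynomial.X 0 : MvPolynomial (Fin 2) ℂ) ^ (i - j))) * key
  · push_neg at hji
    refine ⟨MvPolynomial.X 1 ^ (j - i) *
      ∑ k ∈ Finset.range i, (MvPolynomial.X 0 * MvPolynomial.X 1) ^ k, ?_⟩
    rw [if_neg (by omega)]
    have key := geom_sum_mul ((MvPolynomial.X 0 : MvPolynomial (Fin 2) ℂ) * MvPolynomial.X 1) i
    conv_lhs => rw [show j = j - i + i from (Nat.sub_add_cancel hji.le).symm, pow_add]
    linear_combination (-((MvPolynomial.X 1 : MvPolynomial (Fin 2) ℂ) ^ (j - i))) * key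

theorem poly_vanishing_on_infinite_subset_of_circle
    (P : MvPolynomial (Fin 2) ℂ)
    (h : {ξ : ℂ | ‖ξ‖ = 1 ∧ eval ![ξ, conj ξ] P = 0}.Infinite) :
    (∃ Q : MvPolynomial (Fin 2) ℂ, ∀ z : ℂ,
        eval ![z, conj z] P = (1 - z * conj z) * eval ![z, conj z] Q) ∧
    ∀ ξ : ℂ, ‖ξ‖ = 1 → eval ![ξ, conj ξ] P = 0 := by
  classical
  -- basic facts about points on the circle
  have hcirc : ∀ ξ : ℂ, ‖ξ‖ = 1 → ξ * conj ξ = 1 := by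
    intro ξ hξ
    rw [Complex.mul_conj]
    norm_cast
    rw [Complex.normSq_eq_norm_sq, hξ]; norm_num
  set m : ℕ := P.totalDegree + 1 with hm
  have hbound : ∀ s ∈ P.support, s 0 ≤ P.totalDegree ∧ s 1 ≤ P.totalDegree := by
    intro s hs
    have hsum : (s.sum fun _ e => e) ≤ P.totalDegree := MvPolynomial.le_totalDegree hs
    have : (s.sum fun _ e => e) = s 0 + s 1 := by
      rw [Finsupp.sum_fintype _ _ (fun _ => rfl), Fin.sum_univ_two]
    omega
  -- one-variable pieces
  set g : Polynomial ℂ := ∑ s ∈ P.support,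
    if s 1 ≤ s 0 then Polynomial.C (coeff s P) * Polynomial.X ^ (s 0 - s 1) else 0 with hgdef
  set hp : Polynomial ℂ := ∑ s ∈ P.support,
    if s 1 ≤ s 0 then 0 else Polynomial.C (coeff s P) * Polynomial.X ^ (s 1 - s 0) with hpdef
  -- decomposition of P
  set R : MvPolynomial (Fin 2) ℂ := ∑ s ∈ P.support,
    MvPolynomial.C (coeff s P) *
      (if s 1 ≤ s 0 then MvPolynomial.X 0 ^ (s 0 - s 1) else MvPolynomial.X 1 ^ (s 1 - s 0))
    with hRdef
  choose q hq using mono_div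
  obtain ⟨Q₀, hQ₀⟩ : ∃ Q₀ : MvPolynomial (Fin 2) ℂ,
      P = (MvPolynomial.X 0 * MvPolynomial.X 1 - 1) * Q₀ + R := by
    refine ⟨∑ s ∈ P.support, MvPolynomial.C (coeff s P) * q (s 0) (s 1), ?_⟩
    conv_lhs => rw [P.as_sum]
    rw [hRdef, Finset.mul_sum, ← Finset.sum_add_distrib]
    refine Finset.sum_congr rfl fun s hs => ?_
    rw [monomial_eq, Finsupp.prod_fintype _ _ (fun _ => pow_zero _), Fin.prod_univ_two,
      hq (s 0) (s 1)]
    ring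
  -- evaluation of R
  have hevalR : ∀ z w : ℂ, eval ![z, w] R = g.eval z + hp.eval w := by
    intro z w
    rw [hRdef, map_sum, hgdef, hpdef, Polynomial.eval_finset_sum, Polynomial.eval_finset_sum,
      ← Finset.sum_add_distrib]
    refine Finset.sum_congr rfl fun s hs => ?_
    by_cases hsle : s 1 ≤ s 0 <;>
      simp [hsle]
  -- evaluation of P
  have hevalP : ∀ z w : ℂ, eval ![z, w] P =
      (z * w - 1) * eval ![z, w] Q₀ + (g.eval z + hp.eval w) := by
    intro z w
    conv_lhs => rw [hQ₀]
    rw [map_add, map_mul, map_sub, map_mul, map_one, hevalR]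
    simp
  -- natDegree bound and zero constant coefficient of hp
  have hpdeg : hp.natDegree ≤ m := by
    rw [hpdef]
    refine Polynomial.natDegree_sum_le_of_forall_le _ _ fun s hs => ?_
    by_cases hsle : s 1 ≤ s 0
    · simp [hsle]
    · rw [if_neg hsle]
      refine (Polynomial.natDegree_C_mul_le _ _).trans ?_
      simp only [Polynomial.natDegree_X_pow]
      have := hbound s hs
      omega
  have hpconst : hp.coeff 0 = 0 := by
    rw [hpdef, Polynomial.finset_sum_coeff]
    refine Finset.sum_eq_zero fun s hs => ?_
    by_cases hsle : s 1 ≤ s 0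
    · simp [hsle]
    · rw [if_neg hsle, Polynomial.coeff_C_mul, Polynomial.coeff_X_pow, if_neg (by omega)]
      ring
  -- the reflected polynomial
  set W : Polynomial ℂ := g * Polynomial.X ^ m + Polynomial.reflect m hp with hWdef
  have hreflect : ∀ ξ : ℂ, ξ ≠ 0 →
      (Polynomial.reflect m hp).eval ξ = ξ ^ m * hp.eval ξ⁻¹ := by
    intro ξ hξ
    have hinv : Invertible (ξ⁻¹) := invertibleOfNonzero (inv_ne_zero hξ)
    have key := Polynomial.eval₂_reflect_mul_pow (RingHom.id ℂ) (ξ⁻¹) m hp hpdeg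
    rw [invOf_eq_inv, inv_inv] at key
    have hid : ∀ (x : ℂ) (p : Polynomial ℂ),
        Polynomial.eval₂ (RingHom.id ℂ) x p = p.eval x := fun _ _ => rfl
    rw [hid, hid] at key
    have h1 : (ξ⁻¹) ^ m * ξ ^ m = 1 := by
      rw [← mul_pow, inv_mul_cancel₀ hξ, one_pow]
    calc (Polynomial.reflect m hp).eval ξ
        = (Polynomial.reflect m hp).eval ξ * ((ξ⁻¹) ^ m * ξ ^ m) := by rw [h1, mul_one]
      _ = (Polynomial.reflect m hp).eval ξ * (ξ⁻¹) ^ m * ξ ^ m := by ring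
      _ = ξ ^ m * hp.eval ξ⁻¹ := by rw [key]; ring
  have hW0 : W = 0 := by
    refine Polynomial.eq_zero_of_infinite_isRoot W (h.mono ?_)
    rintro ξ ⟨hξ1, hξ2⟩
    have hξne : ξ ≠ 0 := by
      intro h0; rw [h0] at hξ1; simp at hξ1
    have hξc : ξ * conj ξ = 1 := hcirc ξ hξ1
    have hξinv : conj ξ = ξ⁻¹ := eq_inv_of_mul_eq_one_right hξc
    have heval := hevalP ξ (conj ξ)
    rw [hξ2, hξc, sub_self, zero_mul, zero_add] at heval
    show W.eval ξ = 0
    rw [hWdef, Polynomial.eval_add, Polynomial.eval_mul, Polynomial.eval_pow,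
      Polynomial.eval_X, hreflect ξ hξne, ← hξinv]
    linear_combination (-(ξ ^ m)) * heval
  -- extract g = 0 and hp = 0
  have hrefl_eq : Polynomial.reflect m hp = -(g * Polynomial.X ^ m) := by
    have := hW0
    rw [hWdef] at this
    linear_combination this
  have hg0 : g = 0 := by
    ext k
    have h1 : (g * Polynomial.X ^ m).coeff (k + m) = g.coeff k := Polynomial.coeff_mul_X_pow g m k
    have h2 : (Polynomial.reflect m hp).coeff (k + m) = -(g.coeff k) := by
      rw [hrefl_eq, Polynomial.coeff_neg, h1]
    rw [Polynomial.coeff_reflect] at h2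
    rcases Nat.eq_zero_or_pos k with hk | hk
    · subst hk
      rw [zero_add, Polynomial.revAt_le (le_refl m), Nat.sub_self, hpconst] at h2
      simpa using h2.symm
    · have : Polynomial.revAt m (k + m) = k + m := by
        exact Polynomial.revAt_eq_self_of_lt (by omega)
      rw [this] at h2
      have : hp.coeff (k + m) = 0 :=
        Polynomial.coeff_eq_zero_of_natDegree_lt (by omega)
      rw [this] at h2
      simpa using h2.symm
  have hp0 : hp = 0 := by
    have hr0 : Polynomial.reflect m hp = 0 := by rw [hrefl_eq, hg0]; simp
    ext n
    have := congrArg (fun p => Polynomial.coeff p (Polynomial.revAt m n)) hr0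
    simpa [Polynomial.coeff_reflect, Polynomial.revAt_invol] using this
  -- conclusion
  have hfinal : ∀ z : ℂ, eval ![z, conj z] P = (1 - z * conj z) * eval ![z, conj z] (-Q₀) := by
    intro z
    rw [hevalP z (conj z), hg0, hp0, map_neg]
    simp only [Polynomial.eval_zero, add_zero]
    ring
  refine ⟨⟨-Q₀, hfinal⟩, fun ξ hξ => ?_⟩
  rw [hfinal ξ, hcirc ξ hξ, sub_self, zero_mul]
end

section
/- Let f(z, w) be a polynomial in z, w, z̄, w̄ and let h be a continuous function on the closed bidisc. Suppose f·h = 0 on the distinguished part 𝕋 × closure(𝔻) of the boundary. Then either f vanishes identically on 𝕋 × closure(𝔻) or h vanishes identically on 𝕋 × closure(𝔻). -/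
open MvPolynomial ComplexConjugate Metric Complex Set

-- analyticity of eval of an MvPolynomial at analytic coordinate functions
lemma analytic_eval (P : MvPolynomial (Fin 4) ℂ) (v : ℝ → Fin 4 → ℂ)
    (hv : ∀ i, AnalyticOnNhd ℝ (fun t => v t i) Set.univ) :
    AnalyticOnNhd ℝ (fun t => eval (v t) P) Set.univ := by
  induction P using MvPolynomial.induction_on with
  | C a => simpa using analyticOnNhd_const
  | add p q hp hq => simpa [Pi.add_def] using hp.add hq
  | mul_X p i hp => simpa using hp.mul (hv i)

lemma aOfReal : AnalyticOnNhd ℝ (fun t : ℝ => (t : ℂ)) Set.univ :=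
  Complex.ofRealCLM.analyticOnNhd _

lemma dense_ne_zero {f : ℝ → ℂ} (hf : AnalyticOnNhd ℝ f Set.univ) {t₀ : ℝ}
    (h0 : f t₀ ≠ 0) : Dense {t | f t ≠ 0} := by
  intro θ
  rw [mem_closure_iff_frequently]
  by_contra hcon
  have hev : f =ᶠ[nhds θ] 0 := by
    filter_upwards [(Filter.not_frequently.mp hcon)] with t ht
    simpa using ht
  have := hf.eqOn_zero_of_preconnected_of_eventuallyEq_zero isPreconnected_univ
    (Set.mem_univ θ) hev (Set.mem_univ t₀)
  exact h0 this

lemma conj_exp_real (θ : ℝ) : conj (Complex.exp (θ * I)) = Complex.exp (-(θ:ℂ) * I) := by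
  rw [← Complex.exp_conj]
  congr 1
  simp [map_mul, Complex.conj_ofReal, Complex.conj_I]

lemma norm_exp_real (θ : ℝ) : ‖Complex.exp ((θ:ℂ) * I)‖ = 1 := by
  simp [Complex.norm_exp_ofReal_mul_I]

lemma stepA (P : MvPolynomial (Fin 4) ℂ) (h : ℂ × ℂ → ℂ)
    (hc : ContinuousOn h (closedBall (0 : ℂ) 1 ×ˢ closedBall (0 : ℂ) 1))
    (hzero : ∀ ξ w : ℂ, ‖ξ‖ = 1 → ‖w‖ ≤ 1 →
      eval ![ξ, w, conj ξ, conj w] P * h (ξ, w) = 0)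
    (w : ℂ) (hw : ‖w‖ ≤ 1) :
    (∀ ξ : ℂ, ‖ξ‖ = 1 → eval ![ξ, w, conj ξ, conj w] P = 0) ∨
    (∀ ξ : ℂ, ‖ξ‖ = 1 → h (ξ, w) = 0) := by
  set A : ℝ → ℂ := fun θ => eval ![Complex.exp (θ * I), w, Complex.exp (-(θ:ℂ) * I), conj w] P with hA
  have hAF : ∀ θ : ℝ, A θ = eval ![Complex.exp (θ * I), w, conj (Complex.exp (θ * I)), conj w] P := by
    intro θ; rw [conj_exp_real]
  have hξrep : ∀ ξ : ℂ, ‖ξ‖ = 1 → Complex.exp ((ξ.arg : ℂ) * I) = ξ := by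
    intro ξ hξ
    have := Complex.norm_mul_exp_arg_mul_I ξ
    rwa [show ((‖ξ‖ : ℝ) : ℂ) = 1 by
      rw [hξ]; norm_num, one_mul] at this
  by_cases hz : ∀ ξ : ℂ, ‖ξ‖ = 1 → eval ![ξ, w, conj ξ, conj w] P = 0
  · exact Or.inl hz
  right
  push_neg at hz
  obtain ⟨ξ₁, hξ₁, hne⟩ := hz
  -- A is analytic
  have hAan : AnalyticOnNhd ℝ A Set.univ := by
    apply analytic_eval
    intro i
    fin_cases i
    · simpa [Function.comp_def] using (analyticOnNhd_cexp.restrictScalars.comp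
        (aOfReal.mul analyticOnNhd_const) (Set.mapsTo_univ _ _))
    · simpa using analyticOnNhd_const
    · have : AnalyticOnNhd ℝ (fun t : ℝ => Complex.exp (-(t:ℂ) * I)) Set.univ := by
        apply analyticOnNhd_cexp.restrictScalars.comp _ (Set.mapsTo_univ _ _)
        simpa using ((aOfReal.neg).mul analyticOnNhd_const)
      simpa using this
    · simpa using analyticOnNhd_const
  have hA1 : A ξ₁.arg ≠ 0 := by
    rw [hAF, hξrep ξ₁ hξ₁]; exact hne
  have hD : Dense {θ : ℝ | A θ ≠ 0} := dense_ne_zero hAan hA1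
  -- g is continuous
  have hwmem : w ∈ closedBall (0:ℂ) 1 := by simpa [mem_closedBall_zero_iff] using hw
  have hgc : Continuous (fun θ : ℝ => h (Complex.exp (θ * I), w)) := by
    apply hc.comp_continuous
    · exact (Continuous.cexp (by continuity)).prodMk continuous_const
    · intro θ
      simp only [Set.mem_prod]
      exact ⟨by simp [mem_closedBall_zero_iff, norm_exp_real], hwmem⟩
  have hgz : ∀ θ ∈ {θ : ℝ | A θ ≠ 0}, h (Complex.exp (θ * I), w) = 0 := by
    intro θ hθ
    have h1 : ‖Complex.exp ((θ:ℂ) * I)‖ = 1 := norm_exp_real θ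
    have := hzero (Complex.exp (θ * I)) w h1 hw
    rcases mul_eq_zero.mp this with h' | h'
    · exact absurd (by rw [hAF θ]; exact h') hθ
    · exact h'
  have hall : (fun θ : ℝ => h (Complex.exp (θ * I), w)) = fun _ => 0 :=
    Continuous.ext_on hD hgc continuous_const hgz
  intro ξ hξ
  have := congrFun hall ξ.arg
  simpa [hξrep ξ hξ] using this

lemma seg_norm {w w₀ : ℂ} (hw : ‖w‖ ≤ 1) (hw₀ : ‖w₀‖ ≤ 1) {t : ℝ}
    (ht : t ∈ Set.Icc (0:ℝ) 1) : ‖w + (t:ℂ) * (w₀ - w)‖ ≤ 1 := by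
  have heq : w + (t:ℂ) * (w₀ - w) = ((1-t:ℝ)) • w + (t:ℝ) • w₀ := by
    push_cast [Complex.real_smul]; ring
  rw [heq]
  calc ‖(1-t:ℝ) • w + (t:ℝ) • w₀‖ ≤ ‖(1-t:ℝ) • w‖ + ‖(t:ℝ) • w₀‖ := norm_add_le _ _
    _ ≤ (1-t) * 1 + t * 1 := by
        rw [norm_smul, norm_smul, Real.norm_eq_abs, Real.norm_eq_abs,
          _root_.abs_of_nonneg (by linarith [ht.2]), _root_.abs_of_nonneg ht.1]
        gcongr <;> first | assumption | linarith [ht.1, ht.2]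
    _ = 1 := by ring

theorem poly_or_continuous_factor_vanishes_on_distinguished_boundary
    (P : MvPolynomial (Fin 4) ℂ) (h : ℂ × ℂ → ℂ)
    (hc : ContinuousOn h (closedBall (0 : ℂ) 1 ×ˢ closedBall (0 : ℂ) 1))
    (hzero : ∀ ξ w : ℂ, ‖ξ‖ = 1 → ‖w‖ ≤ 1 →
      eval ![ξ, w, conj ξ, conj w] P * h (ξ, w) = 0) :
    (∀ ξ w : ℂ, ‖ξ‖ = 1 → ‖w‖ ≤ 1 → eval ![ξ, w, conj ξ, conj w] P = 0) ∨
    (∀ ξ w : ℂ, ‖ξ‖ = 1 → ‖w‖ ≤ 1 → h (ξ, w) = 0) := by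
  by_cases hF : ∀ ξ w : ℂ, ‖ξ‖ = 1 → ‖w‖ ≤ 1 → eval ![ξ, w, conj ξ, conj w] P = 0
  · exact Or.inl hF
  right
  push_neg at hF
  obtain ⟨ξ₀, w₀, hξ₀, hw₀, hne⟩ := hF
  intro ξ w hξ hw
  -- the path from w to w₀
  set γ : ℝ → ℂ := fun t => w + (t:ℂ) * (w₀ - w) with hγ
  set ψ : ℝ → ℂ := fun t =>
    eval ![ξ₀, γ t, conj ξ₀, conj w + (t:ℂ) * conj (w₀ - w)] P with hψ
  have hψF : ∀ t : ℝ, ψ t = eval ![ξ₀, γ t, conj ξ₀, conj (γ t)] P := by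
    intro t
    have : conj (γ t) = conj w + (t:ℂ) * conj (w₀ - w) := by
      simp [hγ, map_add, map_mul, Complex.conj_ofReal]
    rw [hψ, this]
  have hψan : AnalyticOnNhd ℝ ψ Set.univ := by
    apply analytic_eval
    intro i
    fin_cases i
    · simpa using analyticOnNhd_const
    · simpa [hγ, Pi.add_def] using (analyticOnNhd_const.add (aOfReal.mul analyticOnNhd_const))
    · simpa using analyticOnNhd_const
    · simpa [Pi.add_def] using (analyticOnNhd_const.add (aOfReal.mul analyticOnNhd_const))
  have hψ1 : ψ 1 ≠ 0 := by
    have hγ1 : γ 1 = w₀ := by simp [hγ]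
    rw [hψF, hγ1]; exact hne
  have hD : Dense {t : ℝ | ψ t ≠ 0} := dense_ne_zero hψan hψ1
  -- the good set near 0
  set s : Set ℝ := {t : ℝ | ψ t ≠ 0} ∩ Set.Ioo 0 1 with hs
  have h0cl : (0:ℝ) ∈ closure s := by
    rw [Metric.mem_closure_iff]
    intro ε hε
    obtain ⟨t, ht1, ht2⟩ := hD.inter_open_nonempty (Set.Ioo 0 (min ε 1)) isOpen_Ioo
      ⟨min ε 1 / 2, by constructor <;> [positivity; exact half_lt_self (by positivity)]⟩
    refine ⟨t, ⟨ht2, ht1.1, lt_of_lt_of_le ht1.2 (min_le_right _ _)⟩, ?_⟩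
    rw [Real.dist_eq, abs_sub_comm, _root_.abs_of_nonneg (by linarith [ht1.1])]
    simpa using lt_of_lt_of_le ht1.2 (min_le_left _ _)
  have hsub : s ⊆ Set.Icc (0:ℝ) 1 := fun t ht => ⟨le_of_lt ht.2.1, le_of_lt ht.2.2⟩
  -- h vanishes on the good set
  have hks : ∀ t ∈ s, h (ξ, γ t) = 0 := by
    intro t ht
    have htI : t ∈ Set.Icc (0:ℝ) 1 := hsub ht
    have hγt : ‖γ t‖ ≤ 1 := seg_norm hw hw₀ htI
    rcases stepA P h hc hzero (γ t) hγt with hcase | hcase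
    · exact absurd ((hψF t).trans (hcase ξ₀ hξ₀)) ht.1
    · exact hcase ξ hξ
  -- continuity of k on Icc 0 1
  have hkc : ContinuousOn (fun t : ℝ => h (ξ, γ t)) (Set.Icc 0 1) := by
    apply hc.comp
    · exact (continuous_const.prodMk (by continuity)).continuousOn
    · intro t ht
      exact ⟨by simpa [mem_closedBall_zero_iff] using hξ.le,
        by simpa [mem_closedBall_zero_iff] using seg_norm hw hw₀ ht⟩
  have hne' : (nhdsWithin (0:ℝ) s).NeBot := mem_closure_iff_nhdsWithin_neBot.mp h0cl
  have htend : Filter.Tendsto (fun t : ℝ => h (ξ, γ t)) (nhdsWithin 0 s) (nhds (h (ξ, γ 0))) :=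
    ((hkc.continuousWithinAt (by constructor <;> norm_num)).mono hsub)
  have htend0 : Filter.Tendsto (fun t : ℝ => h (ξ, γ t)) (nhdsWithin 0 s) (nhds 0) := by
    apply Filter.Tendsto.congr' _ tendsto_const_nhds
    filter_upwards [self_mem_nhdsWithin] with t ht
    exact (hks t ht).symm
  have : h (ξ, γ 0) = 0 := tendsto_nhds_unique htend htend0
  simpa [hγ] using this
end

section
/- Let φ, ψ be the radial functions φ(w) = max(1 − 2|w|, 0) and ψ(w) = max(2|w| − 1, 0) on the unit disc. Then the product of Toeplitz operators T_φ T_ψ on the Bergman space A²(𝔻) is not the zero operator, even though φ·ψ ≡ 0 on the disc. -/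
open MeasureTheory Metric ComplexConjugate

/-- The Bergman kernel of the unit disc: K(w,z) = 1/(π (1 − w z̄)²). -/
noncomputable def bergmanKernel (w z : ℂ) : ℂ := 1 / (Real.pi * (1 - w * conj z) ^ 2)

/-- The Toeplitz operator with symbol φ on the Bergman space of the unit disc,
expressed via the reproducing-kernel integral formula. -/
noncomputable def toeplitzD (φ h : ℂ → ℂ) : ℂ → ℂ :=
  fun w => ∫ z in ball (0 : ℂ) 1, bergmanKernel w z * (φ z * h z)

/-- φ(w) = max(1 − 2|w|, 0). -/
noncomputable def phiEx (w : ℂ) : ℂ := ((max (1 - 2 * ‖w‖) 0 : ℝ) : ℂ)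

/-- ψ(w) = max(2|w| − 1, 0). -/
noncomputable def psiEx (w : ℂ) : ℂ := ((max (2 * ‖w‖ - 1) 0 : ℝ) : ℂ)

-- continuity
lemma cont_psi : Continuous psiEx := by
  unfold psiEx
  fun_prop

lemma cont_phi : Continuous phiEx := by
  unfold phiEx
  fun_prop

lemma integrableOn_ball {E : Type*} [NormedAddCommGroup E] {f : ℂ → E} (hf : Continuous f) :
    IntegrableOn f (ball (0:ℂ) 1) := by
  exact (hf.continuousOn.integrableOn_compact (isCompact_closedBall 0 1)).mono_set
    ball_subset_closedBall

-- rotation lemma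
lemma rot_int_zero (n : ℕ) (hn : n ≠ 0) :
    ∫ ζ in ball (0:ℂ) 1, psiEx ζ * (conj ζ) ^ n = 0 := by
  set a : ℂ := Complex.exp ((Real.pi / n : ℝ) * Complex.I) with ha_def
  have ha : ‖a‖ = 1 := Complex.norm_exp_ofReal_mul_I _
  have han : a ^ n = -1 := by
    rw [ha_def, ← Complex.exp_nat_mul]
    have : (n:ℂ) * ((Real.pi / n : ℝ) * Complex.I) = Real.pi * Complex.I := by
      have hnC : (n:ℂ) ≠ 0 := by exact_mod_cast hn
      push_cast
      field_simp
    rw [this, Complex.exp_pi_mul_I]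
  set u : Circle := ⟨a, mem_sphere_zero_iff_norm.mpr ha⟩ with hu
  have hmp : MeasurePreserving (rotation u) volume volume :=
    (rotation u).measurePreserving
  have hemb : MeasurableEmbedding (rotation u) :=
    (rotation u).toHomeomorph.measurableEmbedding
  have hpre : (rotation u) ⁻¹' (ball (0:ℂ) 1) = ball (0:ℂ) 1 := by
    ext ζ
    simp only [Set.mem_preimage, mem_ball_zero_iff, rotation_apply]
    rw [norm_mul, ha, one_mul]
  have key := hmp.setIntegral_preimage_emb hemb
    (fun ζ => psiEx ζ * (conj ζ) ^ n) (ball (0:ℂ) 1)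
  rw [hpre] at key
  have heq : ∀ ζ, psiEx ((rotation u) ζ) * (conj ((rotation u) ζ)) ^ n
      = -(psiEx ζ * (conj ζ) ^ n) := by
    intro ζ
    have h1 : psiEx (a * ζ) = psiEx ζ := by
      unfold psiEx; rw [norm_mul, ha, one_mul]
    have h2 : (conj (a * ζ)) ^ n = -(conj ζ) ^ n := by
      rw [map_mul, mul_pow, ← map_pow, han]
      simp
    rw [rotation_apply]
    show psiEx (a * ζ) * (conj (a*ζ)) ^ n = _
    rw [h1, h2]; ring
  rw [show (fun ζ => psiEx ((rotation u) ζ) * (conj ((rotation u) ζ)) ^ n)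
      = fun ζ => -(psiEx ζ * (conj ζ) ^ n) from funext heq] at key
  rw [integral_neg] at key
  linear_combination -key / 2


-- series for the Bergman kernel
lemma hasSum_kernel {𝕜 : Type*} [NormedField 𝕜] [CompleteSpace 𝕜] {a : 𝕜} (ha : ‖a‖ < 1) :
    HasSum (fun n : ℕ => ((n : 𝕜) + 1) * a ^ n) (1 / (1 - a) ^ 2) := by
  have h1 : HasSum (fun n : ℕ => (n : 𝕜) * a ^ n) (a / (1 - a) ^ 2) :=
    hasSum_coe_mul_geometric_of_norm_lt_one ha
  have h2 : HasSum (fun n : ℕ => a ^ n) (1 - a)⁻¹ := hasSum_geometric_of_norm_lt_one ha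
  have h3 := h1.add h2
  have hne : (1 : 𝕜) - a ≠ 0 := by
    intro h
    rw [sub_eq_zero] at h
    rw [← h] at ha
    simp at ha
  convert h3 using 1
  · ext n; ring
  · field_simp
    ring

lemma summable_aux {r : ℝ} (hr : 0 ≤ r) (hr1 : r < 1) :
    Summable (fun n : ℕ => ((n : ℝ) + 1) * r ^ n) := by
  have : ‖r‖ < 1 := by rwa [Real.norm_of_nonneg hr]
  exact (hasSum_kernel this).summable

lemma psi_nonneg_le_one (ζ : ℂ) (hζ : ζ ∈ ball (0:ℂ) 1) : ‖psiEx ζ‖ ≤ 1 := by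
  rw [mem_ball_zero_iff] at hζ
  unfold psiEx
  rw [Complex.norm_real, Real.norm_of_nonneg (le_max_right _ _)]
  rw [max_le_iff]
  constructor <;> nlinarith

noncomputable def Ipsi : ℝ := ∫ ζ in ball (0:ℂ) 1, max (2 * ‖ζ‖ - 1) 0

lemma claimA {w : ℂ} (hw : ‖w‖ < 1) :
    toeplitzD psiEx (fun _ => 1) w = ((Ipsi / Real.pi : ℝ) : ℂ) := by
  have hw0 : 0 ≤ ‖w‖ := norm_nonneg w
  have hπ : (Real.pi : ℂ) ≠ 0 := by
    exact_mod_cast Real.pi_ne_zero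
  set F : ℕ → ℂ → ℂ := fun n ζ => ((Real.pi : ℂ))⁻¹ * (((n:ℂ) + 1) * (w * conj ζ) ^ n) * psiEx ζ
    with hF
  -- pointwise identity on the ball
  have hpt : ∀ ζ ∈ ball (0:ℂ) 1,
      bergmanKernel w ζ * (psiEx ζ * 1) = ∑' n, F n ζ := by
    intro ζ hζ
    rw [mem_ball_zero_iff] at hζ
    have hna : ‖w * conj ζ‖ < 1 := by
      rw [norm_mul, RCLike.norm_conj]
      nlinarith
    have hs := hasSum_kernel (𝕜 := ℂ) hna
    have hne : (1 : ℂ) - w * conj ζ ≠ 0 := by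
      intro h
      rw [sub_eq_zero] at h
      rw [← h] at hna
      simp at hna
    have := ((hs.mul_left ((Real.pi : ℂ))⁻¹).mul_right (psiEx ζ)).tsum_eq
    rw [hF]
    simp only []
    rw [this]
    unfold bergmanKernel
    field_simp
  -- each F n integrable on ball
  have hFint : ∀ n, IntegrableOn (F n) (ball (0:ℂ) 1) := by
    intro n
    apply integrableOn_ball
    rw [hF]
    exact (continuous_const.mul (continuous_const.mul
      ((continuous_const.mul Complex.continuous_conj).pow n))).mul cont_psi
  -- summability of integrals of norms
  have hvol : (volume (ball (0:ℂ) 1)).toReal = Real.pi := by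
    rw [Complex.volume_ball]
    simp [Real.pi_pos.le]
  have hnorm : ∀ n, ∀ ζ ∈ ball (0:ℂ) 1,
      ‖F n ζ‖ ≤ (Real.pi)⁻¹ * (((n:ℝ) + 1) * ‖w‖ ^ n) := by
    intro n ζ hζ
    rw [mem_ball_zero_iff] at hζ
    rw [hF]
    simp only []
    rw [norm_mul, norm_mul, norm_mul, norm_pow, norm_mul, RCLike.norm_conj]
    have e1 : ‖((Real.pi : ℂ))⁻¹‖ = (Real.pi)⁻¹ := by
      rw [norm_inv, Complex.norm_real, Real.norm_of_nonneg Real.pi_pos.le]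
    have e2 : ‖((n:ℂ) + 1)‖ = (n:ℝ) + 1 := by
      rw [show ((n:ℂ) + 1) = (((n:ℝ) + 1 : ℝ) : ℂ) by push_cast; ring, Complex.norm_real,
        Real.norm_of_nonneg (by positivity)]
    rw [e1, e2]
    have h3 : ‖psiEx ζ‖ ≤ 1 := psi_nonneg_le_one ζ (by rwa [mem_ball_zero_iff])
    have h4 : (‖w‖ * ‖ζ‖) ^ n ≤ ‖w‖ ^ n := by
      apply pow_le_pow_left₀ (by positivity)
      nlinarith [norm_nonneg w, norm_nonneg ζ]
    have h7 : (0:ℝ) ≤ ‖psiEx ζ‖ := norm_nonneg _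
    have hA : Real.pi⁻¹ * (((n:ℝ)+1) * (‖w‖*‖ζ‖)^n) ≤ Real.pi⁻¹ * (((n:ℝ)+1) * ‖w‖^n) := by
      gcongr
    calc Real.pi⁻¹ * (((n:ℝ) + 1) * (‖w‖ * ‖ζ‖) ^ n) * ‖psiEx ζ‖
        ≤ (Real.pi⁻¹ * (((n:ℝ)+1) * ‖w‖^n)) * 1 := mul_le_mul hA h3 h7 (by positivity)
      _ = Real.pi⁻¹ * (((n:ℝ)+1) * ‖w‖^n) := mul_one _
  have hFsum : Summable fun n => ∫ ζ in ball (0:ℂ) 1, ‖F n ζ‖ := by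
    apply Summable.of_nonneg_of_le
      (fun n => integral_nonneg fun ζ => norm_nonneg _)
      (fun n => ?_) (((summable_aux hw0 hw).mul_left (Real.pi)⁻¹).mul_right Real.pi)
    have hle : ∫ ζ in ball (0:ℂ) 1, ‖F n ζ‖
        ≤ ∫ _ζ in ball (0:ℂ) 1, (Real.pi)⁻¹ * (((n:ℝ) + 1) * ‖w‖ ^ n) := by
      apply setIntegral_mono_on (hFint n).norm
        ((integrableOn_const_iff enorm_ne_top).mpr (Or.inr measure_ball_lt_top)) measurableSet_ball
      exact hnorm n
    rw [setIntegral_const, smul_eq_mul, measureReal_def, hvol] at hle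
    linarith
  -- interchange sum and integral
  have hinter : toeplitzD psiEx (fun _ => 1) w = ∑' n, ∫ ζ in ball (0:ℂ) 1, F n ζ := by
    unfold toeplitzD
    rw [setIntegral_congr_fun measurableSet_ball hpt]
    exact (integral_tsum_of_summable_integral_norm hFint hFsum).symm
  -- compute each integral
  have hterm : ∀ n : ℕ, ∫ ζ in ball (0:ℂ) 1, F n ζ
      = ((Real.pi : ℂ))⁻¹ * (((n:ℂ) + 1) * w ^ n) * ∫ ζ in ball (0:ℂ) 1,
          psiEx ζ * (conj ζ) ^ n := by
    intro n
    rw [← integral_const_mul]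
    congr 1
    funext ζ
    rw [hF]
    simp only []
    rw [mul_pow]
    ring
  rw [hinter]
  rw [tsum_eq_single 0 ?_]
  · rw [hterm 0]
    have : ∫ ζ in ball (0:ℂ) 1, psiEx ζ * (conj ζ) ^ 0
        = ((Ipsi : ℝ) : ℂ) := by
      simp only [pow_zero, mul_one]
      unfold psiEx Ipsi
      exact integral_ofReal
    rw [this]
    push_cast
    field_simp
    ring
  · intro n hn
    rw [hterm n, rot_int_zero n hn, mul_zero]


noncomputable def Iphi : ℝ := ∫ z in ball (0:ℂ) 1, max (1 - 2 * ‖z‖) 0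

lemma Ipsi_pos : 0 < Ipsi := by
  unfold Ipsi
  have hcont : Continuous fun ζ : ℂ => max (2 * ‖ζ‖ - 1) 0 := by fun_prop
  refine (setIntegral_pos_iff_support_of_nonneg_ae
    (Filter.Eventually.of_forall fun ζ => le_max_right _ _) (integrableOn_ball hcont)).mpr ?_
  have hsub : ball ((3/4 : ℝ) : ℂ) (1/8) ⊆
      (Function.support fun ζ : ℂ => max (2 * ‖ζ‖ - 1) 0) ∩ ball (0:ℂ) 1 := by
    intro z hz
    rw [mem_ball] at hz
    have h34 : ‖((3/4 : ℝ) : ℂ)‖ = 3/4 := by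
      rw [Complex.norm_real]; norm_num
    have hlow : (5/8 : ℝ) < ‖z‖ := by
      have := norm_sub_norm_le z ((3/4 : ℝ) : ℂ)
      rw [h34] at this
      have : ‖z - ((3/4:ℝ):ℂ)‖ < 1/8 := by rwa [dist_eq_norm] at hz
      have h2 := norm_sub_norm_le ((3/4 : ℝ) : ℂ) z
      rw [h34, norm_sub_rev] at h2
      linarith
    constructor
    · simp only [Function.mem_support]
      have : (0:ℝ) < 2 * ‖z‖ - 1 := by linarith
      positivity
    · rw [mem_ball_zero_iff]
      have : ‖z - ((3/4:ℝ):ℂ)‖ < 1/8 := by rwa [dist_eq_norm] at hz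
      have := norm_add_le (z - ((3/4:ℝ):ℂ)) ((3/4:ℝ):ℂ)
      simp only [sub_add_cancel] at this
      rw [h34] at this
      linarith
  calc (0 : ENNReal) < volume (ball ((3/4 : ℝ) : ℂ) (1/8)) :=
        measure_ball_pos volume _ (by norm_num)
    _ ≤ _ := measure_mono hsub

lemma Iphi_pos : 0 < Iphi := by
  unfold Iphi
  have hcont : Continuous fun z : ℂ => max (1 - 2 * ‖z‖) 0 := by fun_prop
  refine (setIntegral_pos_iff_support_of_nonneg_ae
    (Filter.Eventually.of_forall fun ζ => le_max_right _ _) (integrableOn_ball hcont)).mpr ?_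
  have hsub : ball (0 : ℂ) (1/4) ⊆
      (Function.support fun z : ℂ => max (1 - 2 * ‖z‖) 0) ∩ ball (0:ℂ) 1 := by
    intro z hz
    rw [mem_ball_zero_iff] at hz
    constructor
    · simp only [Function.mem_support]
      have : (0:ℝ) < 1 - 2 * ‖z‖ := by linarith
      positivity
    · rw [mem_ball_zero_iff]
      linarith
  calc (0 : ENNReal) < volume (ball ((0 : ℝ) : ℂ) (1/4)) :=
        measure_ball_pos volume _ (by norm_num)
    _ ≤ _ := by
        apply measure_mono
        simpa using hsub


theorem product_toeplitz_nonzero_with_vanishing_product_symbol :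
    (∀ w ∈ ball (0 : ℂ) 1, phiEx w * psiEx w = 0) ∧
    ∃ h : ℂ → ℂ, DifferentiableOn ℂ h (ball (0 : ℂ) 1) ∧
      MemLp h 2 (volume.restrict (ball (0 : ℂ) 1)) ∧
      ∃ w ∈ ball (0 : ℂ) 1, toeplitzD phiEx (toeplitzD psiEx h) w ≠ 0 := by
  constructor
  · intro w _
    unfold phiEx psiEx
    rw [← Complex.ofReal_mul]
    have : max (1 - 2 * ‖w‖) 0 * max (2 * ‖w‖ - 1) 0 = 0 := by
      rcases le_total (2 * ‖w‖) 1 with h | h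
      · rw [max_eq_right (by linarith : 2 * ‖w‖ - 1 ≤ 0), mul_zero]
      · rw [max_eq_right (by linarith : 1 - 2 * ‖w‖ ≤ 0), zero_mul]
    rw [this, Complex.ofReal_zero]
  · haveI : IsFiniteMeasure (volume.restrict (ball (0:ℂ) 1)) :=
      ⟨by rw [Measure.restrict_apply_univ]; exact measure_ball_lt_top⟩
    refine ⟨fun _ => 1, differentiableOn_const 1, memLp_const 1, 0, by simp, ?_⟩
    have hπ : (0:ℝ) < Real.pi := Real.pi_pos
    have hπC : (Real.pi : ℂ) ≠ 0 := by exact_mod_cast Real.pi_ne_zero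
    have hkey : toeplitzD phiEx (toeplitzD psiEx fun _ => 1) 0
        = (((Ipsi / Real.pi / Real.pi : ℝ)) : ℂ) * ((Iphi : ℝ) : ℂ) := by
      unfold toeplitzD
      have hcong : ∀ z ∈ ball (0:ℂ) 1,
          bergmanKernel 0 z * (phiEx z * ∫ ζ in ball (0:ℂ) 1,
              bergmanKernel z ζ * (psiEx ζ * 1))
          = (((Ipsi / Real.pi / Real.pi : ℝ)) : ℂ) * phiEx z := by
        intro z hz
        rw [mem_ball_zero_iff] at hz
        have h1 : (∫ ζ in ball (0:ℂ) 1, bergmanKernel z ζ * (psiEx ζ * 1))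
            = ((Ipsi / Real.pi : ℝ) : ℂ) := claimA hz
        rw [h1]
        unfold bergmanKernel
        rw [zero_mul, sub_zero, one_pow, mul_one]
        push_cast
        field_simp
      rw [setIntegral_congr_fun measurableSet_ball hcong, integral_const_mul]
      congr 1
      unfold phiEx Iphi
      exact integral_ofReal
    rw [hkey]
    apply mul_ne_zero
    · rw [Ne, Complex.ofReal_eq_zero]
      have := Ipsi_pos
      positivity
    · rw [Ne, Complex.ofReal_eq_zero]
      exact Iphi_pos.ne'
end

section
/- Let ψ be continuous on the closed polydisc closure(𝔻ⁿ) (n ≥ 2), let ζ ∈ 𝕋, and define ψ_ζ(z) = ψ(ζ, z₂, …, zₙ). Suppose {h_p : p ∈ 𝔻ⁿ} is a family of functions in L²(𝔻^{n−1}) with uniformly bounded norms. Then for q = (ζ, q') with q' ∈ closure(𝔻^{n−1}), we have ‖(ψ − ψ_ζ) · k^𝔻_{p₁} · h_p‖_{L²(𝔻ⁿ)} → 0 as p = (p₁, p') → q in 𝔻ⁿ, where k^𝔻_{p₁}(z₁) = (1 − |p₁|²)/(√π (1 − p̄₁ z₁)²) is the normalized Bergman kernel of the unit disc at p₁. -/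
open Metric MeasureTheory ComplexConjugate Filter Topology
open scoped ENNReal NNReal

/-- The normalized Bergman kernel of the unit disc at p₁:
k_{p₁}(z₁) = (1 − |p₁|²)/(√π (1 − p̄₁ z₁)²). -/
noncomputable def normBergmanKernel (p z : ℂ) : ℂ :=
  ((1 - ‖p‖ ^ 2 : ℝ) : ℂ) / (Real.sqrt Real.pi * (1 - conj p * z) ^ 2)

noncomputable def moeb (p z : ℂ) : ℂ := (p - z) / (1 - conj p * z)

lemma den_ne (p z : ℂ) (hp : ‖p‖ < 1) (hz : ‖z‖ ≤ 1) : 1 - conj p * z ≠ 0 := by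
  intro h
  have h1 : conj p * z = 1 := by linear_combination -h
  have : ‖conj p * z‖ < 1 := by
    rw [norm_mul, RCLike.norm_conj]
    calc ‖p‖ * ‖z‖ ≤ ‖p‖ * 1 := by
          exact mul_le_mul_of_nonneg_left hz (norm_nonneg _)
      _ < 1 := by simpa using hp
  rw [h1] at this; simp at this

lemma normSq_key (p z : ℂ) :
    Complex.normSq (1 - conj p * z) - Complex.normSq (p - z)
      = (1 - Complex.normSq p) * (1 - Complex.normSq z) := by
  simp only [Complex.normSq_apply, Complex.mul_re, Complex.mul_im, Complex.sub_re,
    Complex.sub_im, Complex.one_re, Complex.one_im, Complex.conj_re, Complex.conj_im]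
  ring

lemma moeb_mem (p z : ℂ) (hp : ‖p‖ < 1) (hz : ‖z‖ < 1) : ‖moeb p z‖ < 1 := by
  have hd := den_ne p z hp hz.le
  have h2 : Complex.normSq (p - z) < Complex.normSq (1 - conj p * z) := by
    have : 0 < (1 - Complex.normSq p) * (1 - Complex.normSq z) := by
      apply mul_pos <;>
      · rw [sub_pos, Complex.normSq_eq_norm_sq]
        nlinarith [norm_nonneg p, norm_nonneg z]
    nlinarith [normSq_key p z]
  have h3 : ‖p - z‖ < ‖1 - conj p * z‖ := by
    have e1 : Complex.normSq (p-z) = ‖p-z‖^2 := by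
      rw [Complex.normSq_eq_norm_sq]
    have e2 : Complex.normSq (1 - conj p * z) = ‖1 - conj p * z‖^2 := by
      rw [Complex.normSq_eq_norm_sq]
    rw [e1, e2] at h2
    exact lt_of_pow_lt_pow_left₀ 2 (norm_nonneg _) h2
  rw [moeb, norm_div, div_lt_one (lt_of_le_of_lt (norm_nonneg _) h3)]
  exact h3

lemma moeb_invol (p z : ℂ) (hp : ‖p‖ < 1) (hz : ‖z‖ < 1) : moeb p (moeb p z) = z := by
  have h1 := den_ne p z hp hz.le
  have h2 := den_ne p (moeb p z) hp (moeb_mem p z hp hz).le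
  have h3 := den_ne p p hp hp.le
  have h1' : 1 - z * conj p ≠ 0 := by rwa [mul_comm] at h1
  simp only [moeb] at h2 ⊢
  rw [div_eq_iff h2]
  field_simp
  ring

lemma moeb_hasDerivAt (p z : ℂ) (hd : 1 - conj p * z ≠ 0) :
    HasDerivAt (moeb p) (((Complex.normSq p : ℂ) - 1) / (1 - conj p * z) ^ 2) z := by
  have hu : HasDerivAt (fun w : ℂ => p - w) (-1) z := by
    simpa using (hasDerivAt_id z).const_sub p
  have hv : HasDerivAt (fun w : ℂ => 1 - conj p * w) (-(conj p)) z := by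
    simpa using ((hasDerivAt_id z).const_mul (conj p)).const_sub 1
  have := hu.div hv hd
  refine this.congr_deriv (Eq.symm ?_)
  have : conj p * p = (Complex.normSq p : ℂ) := by
    rw [mul_comm, Complex.mul_conj]
  rw [div_eq_div_iff (pow_ne_zero 2 hd) (pow_ne_zero 2 hd)]
  linear_combination (-(1 - conj p * z)^2) * this

lemma det_clm (c : ℂ) :
    ((ContinuousLinearMap.smulRight (1 : ℂ →L[ℂ] ℂ) c).restrictScalars ℝ).det
      = Complex.normSq c := by
  have : ((ContinuousLinearMap.smulRight (1 : ℂ →L[ℂ] ℂ) c).restrictScalars ℝ : ℂ →ₗ[ℝ] ℂ)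
      = Algebra.lmul ℝ ℂ c := by
    ext x
    · simp [mul_comm]
  rw [ContinuousLinearMap.det, this]
  exact Algebra.norm_complex_apply c

lemma kernel_lintegral_le (p : ℂ) (hp : ‖p‖ < 1) :
    ∫⁻ z in ball (0:ℂ) 1, (‖normBergmanKernel p z‖₊ : ℝ≥0∞) ^ 2 ≤ 1 := by
  set c : ℂ → ℂ := fun z => ((Complex.normSq p : ℂ) - 1) / (1 - conj p * z) ^ 2 with hc
  set f' : ℂ → ℂ →L[ℝ] ℂ :=
    fun z => (ContinuousLinearMap.smulRight (1 : ℂ →L[ℂ] ℂ) (c z)).restrictScalars ℝ with hf'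
  have hπ : (0:ℝ) < Real.pi := Real.pi_pos
  have hp2 : ‖p‖ ^ 2 ≤ 1 := by nlinarith [norm_nonneg p]
  have hnsq : Complex.normSq p = ‖p‖ ^ 2 := by
    rw [Complex.normSq_eq_norm_sq]
  have hpt : ∀ z ∈ ball (0:ℂ) 1, (‖normBergmanKernel p z‖₊ : ℝ≥0∞) ^ 2
      = ENNReal.ofReal |(f' z).det| * (ENNReal.ofReal Real.pi)⁻¹ := by
    intro z hz
    rw [mem_ball_zero_iff] at hz
    have hd := den_ne p z hp hz.le
    have hb : (0:ℝ) < ‖1 - conj p * z‖ := norm_pos_iff.2 hd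
    have e1 : (‖normBergmanKernel p z‖₊ : ℝ≥0∞) ^ 2
        = ENNReal.ofReal (‖normBergmanKernel p z‖ ^ 2) := by
      rw [← enorm_eq_nnnorm, ← ofReal_norm, ← ENNReal.ofReal_pow (norm_nonneg _)]
    have e2 : |(f' z).det| = Complex.normSq (c z) := by
      rw [hf', det_clm, abs_of_nonneg (Complex.normSq_nonneg _)]
    have e3 : ‖normBergmanKernel p z‖ ^ 2 = Complex.normSq (c z) / Real.pi := by
      have hnum : ‖((1 - ‖p‖ ^ 2 : ℝ) : ℂ)‖ = 1 - ‖p‖ ^ 2 := by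
        rw [Complex.norm_real, Real.norm_eq_abs, abs_of_nonneg (by linarith)]
      have hnum2 : ‖((Complex.normSq p : ℂ) - 1)‖ = 1 - ‖p‖ ^ 2 := by
        have h9 : ((Complex.normSq p : ℂ) - 1) = (((Complex.normSq p - 1 : ℝ)) : ℂ) := by
          push_cast; ring
        rw [h9, Complex.norm_real, Real.norm_eq_abs, hnsq,
          abs_of_nonpos (by linarith), neg_sub]
      have hk : ‖normBergmanKernel p z‖
          = (1 - ‖p‖ ^ 2) / (Real.sqrt Real.pi * ‖1 - conj p * z‖ ^ 2) := by
        rw [normBergmanKernel, norm_div, norm_mul, hnum, norm_pow, Complex.norm_real,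
          Real.norm_eq_abs, abs_of_nonneg (Real.sqrt_nonneg _)]
      have hcz : Complex.normSq (c z) = ((1 - ‖p‖ ^ 2) / ‖1 - conj p * z‖ ^ 2) ^ 2 := by
        rw [Complex.normSq_eq_norm_sq, hc]
        simp only []
        rw [norm_div, norm_pow, hnum2]
      rw [hk, hcz, div_pow, mul_pow, Real.sq_sqrt hπ.le, div_pow]
      field_simp
    rw [e1, e2, e3, ENNReal.ofReal_div_of_pos hπ, div_eq_mul_inv]
  rw [setLIntegral_congr_fun measurableSet_ball hpt]
  rw [lintegral_mul_const' _ _ (by simp [Real.pi_pos])]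
  have himg : ∫⁻ z in ball (0:ℂ) 1, ENNReal.ofReal |(f' z).det|
      = volume (moeb p '' ball (0:ℂ) 1) := by
    apply lintegral_abs_det_fderiv_eq_addHaar_image volume measurableSet_ball
    · intro x hx
      rw [mem_ball_zero_iff] at hx
      exact (((hasDerivAt_iff_hasFDerivAt.mp
        (moeb_hasDerivAt p x (den_ne p x hp hx.le))).restrictScalars ℝ)).hasFDerivWithinAt
    · intro a ha b hb hab
      rw [mem_ball_zero_iff] at ha hb
      rw [← moeb_invol p a hp ha, hab, moeb_invol p b hp hb]
  rw [himg]
  have hsub : volume (moeb p '' ball (0:ℂ) 1) ≤ ENNReal.ofReal Real.pi := by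
    have h1 : volume (moeb p '' ball (0:ℂ) 1) ≤ volume (ball (0:ℂ) 1) := by
      apply measure_mono
      rintro w ⟨y, hy, rfl⟩
      exact mem_ball_zero_iff.2 (moeb_mem p y hp (mem_ball_zero_iff.1 hy))
    have h2 : volume (ball (0:ℂ) 1) = ENNReal.ofReal Real.pi := by
      rw [Complex.volume_ball, ← NNReal.coe_real_pi, ENNReal.ofReal_coe_nnreal]
      simp
    rw [← h2]; exact h1
  calc volume (moeb p '' ball (0:ℂ) 1) * (ENNReal.ofReal Real.pi)⁻¹
      ≤ ENNReal.ofReal Real.pi * (ENNReal.ofReal Real.pi)⁻¹ := mul_le_mul_left hsub _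
    _ = 1 := ENNReal.mul_inv_cancel (by positivity) ENNReal.ofReal_ne_top

lemma kernel_far (p ζ z : ℂ) (hζ : ‖ζ‖ = 1) (δ : ℝ) (hδ : 0 < δ) (hpζ : ‖p - ζ‖ ≤ δ / 2)
    (hp : ‖p‖ ≤ 1) (hz : ‖z‖ ≤ 1) (hzζ : δ ≤ ‖z - ζ‖) :
    ‖normBergmanKernel p z‖ ≤ (1 - ‖p‖ ^ 2) * 4 / (Real.sqrt Real.pi * δ ^ 2) := by
  have hs : (0:ℝ) < Real.sqrt Real.pi := Real.sqrt_pos.2 Real.pi_pos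
  have hden : δ / 2 ≤ ‖1 - conj p * z‖ := by
    have h1 : (1 : ℂ) - conj ζ * z = conj ζ * (ζ - z) := by
      have : conj ζ * ζ = 1 := by
        rw [mul_comm, Complex.mul_conj]
        norm_cast
        rw [Complex.normSq_eq_norm_sq, hζ]; norm_num
      linear_combination -this
    have h2 : ‖(1:ℂ) - conj ζ * z‖ = ‖z - ζ‖ := by
      rw [h1, norm_mul, RCLike.norm_conj, hζ, one_mul, norm_sub_rev]
    have h3 : ‖(conj ζ - conj p) * z‖ ≤ δ / 2 := by
      rw [norm_mul]
      have : ‖conj ζ - conj p‖ = ‖p - ζ‖ := by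
        rw [← map_sub, RCLike.norm_conj, norm_sub_rev]
      rw [this]
      calc ‖p - ζ‖ * ‖z‖ ≤ ‖p - ζ‖ * 1 := by
            exact mul_le_mul_of_nonneg_left hz (norm_nonneg _)
        _ ≤ δ / 2 := by simpa using hpζ
    have h4 : (1:ℂ) - conj p * z = (1 - conj ζ * z) + (conj ζ - conj p) * z := by ring
    calc δ / 2 = δ - δ / 2 := by ring
      _ ≤ ‖(1:ℂ) - conj ζ * z‖ - ‖(conj ζ - conj p) * z‖ := by
          rw [h2]; linarith
      _ ≤ ‖(1:ℂ) - conj p * z‖ := by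
          have t := norm_sub_norm_le ((1:ℂ) - conj ζ * z) (-((conj ζ - conj p) * z))
          rw [norm_neg, sub_neg_eq_add] at t
          rw [h4]; exact t
  have hnum : (0:ℝ) ≤ 1 - ‖p‖ ^ 2 := by nlinarith [norm_nonneg p]
  have hk : ‖normBergmanKernel p z‖
      = (1 - ‖p‖ ^ 2) / (Real.sqrt Real.pi * ‖1 - conj p * z‖ ^ 2) := by
    rw [normBergmanKernel, norm_div, norm_mul, norm_pow, Complex.norm_real,
      Complex.norm_real, Real.norm_eq_abs, Real.norm_eq_abs, abs_of_nonneg hnum,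
      abs_of_nonneg (Real.sqrt_nonneg _)]
  rw [hk]
  have e : (1 - ‖p‖ ^ 2) * 4 / (Real.sqrt Real.pi * δ ^ 2)
      = (1 - ‖p‖ ^ 2) / (Real.sqrt Real.pi * (δ / 2) ^ 2) := by
    rw [div_eq_div_iff (by positivity) (by positivity)]; ring
  rw [e]
  apply div_le_div_of_nonneg_left hnum
  · positivity
  · apply mul_le_mul_of_nonneg_left _ hs.le
    apply pow_le_pow_left₀ (by linarith) hden

lemma sq_eLpNorm {α : Type*} [MeasurableSpace α] (μ : Measure α) (f : α → ℂ) :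
    eLpNorm f 2 μ ^ 2 = ∫⁻ y, (‖f y‖₊ : ℝ≥0∞) ^ 2 ∂μ := by
  rw [eLpNorm_eq_lintegral_rpow_enorm two_ne_zero (by norm_num)]
  simp only [enorm_eq_nnnorm]
  rw [← ENNReal.rpow_natCast _ 2, ← ENNReal.rpow_mul]
  have h1 : ENNReal.toReal 2 = (2:ℝ) := by norm_num
  rw [h1]
  norm_num

lemma ennreal_le_of_sq_le_sq {a b : ℝ≥0∞} (h : a ^ 2 ≤ b ^ 2) : a ≤ b := by
  have h2 : (a ^ 2) ^ ((1:ℝ)/2) ≤ (b ^ 2) ^ ((1:ℝ)/2) := ENNReal.rpow_le_rpow h (by norm_num)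
  rwa [← ENNReal.rpow_natCast a 2, ← ENNReal.rpow_natCast b 2, ← ENNReal.rpow_mul,
    ← ENNReal.rpow_mul, (by norm_num : ((2:ℕ):ℝ) * ((1:ℝ)/2) = 1), ENNReal.rpow_one,
    ENNReal.rpow_one] at h2

/-- Lemma 1(i): writing the polydisc 𝔻ⁿ (n = m+1 ≥ 2) as 𝔻 × 𝔻^m, for ψ continuous on the
closed polydisc, ζ ∈ 𝕋, and a family {h_p} bounded in L²(𝔻^m), the L²(𝔻ⁿ)-norms
‖(ψ − ψ_ζ) k^𝔻_{p₁} h_p‖ tend to 0 as p → q = (ζ, q'). -/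
theorem lemma1_part1
    (m : ℕ) (hm : 1 ≤ m)
    (ψ : ℂ × (Fin m → ℂ) → ℂ)
    (hψ : ContinuousOn ψ (closedBall (0 : ℂ) 1 ×ˢ closedBall (0 : Fin m → ℂ) 1))
    (ζ : ℂ) (hζ : ‖ζ‖ = 1)
    (h : ℂ × (Fin m → ℂ) → (Fin m → ℂ) → ℂ)
    (hmeas : ∀ p, AEStronglyMeasurable (h p) (volume.restrict (ball (0 : Fin m → ℂ) 1)))
    (hbd : ∃ C : ℝ, ∀ p,
      eLpNorm (h p) 2 (volume.restrict (ball (0 : Fin m → ℂ) 1)) ≤ ENNReal.ofReal C)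
    (q' : Fin m → ℂ) (hq' : q' ∈ closedBall (0 : Fin m → ℂ) 1) :
    Tendsto
      (fun p : ℂ × (Fin m → ℂ) =>
        eLpNorm
          (fun z : ℂ × (Fin m → ℂ) =>
            (ψ z - ψ (ζ, z.2)) * normBergmanKernel p.1 z.1 * h p z.2) 2
          (volume.restrict (ball (0 : ℂ) 1 ×ˢ ball (0 : Fin m → ℂ) 1)))
      (nhdsWithin (ζ, q') (ball (0 : ℂ) 1 ×ˢ ball (0 : Fin m → ℂ) 1))
      (nhds 0) := by
  classical
  obtain ⟨C0, hC0⟩ := hbd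
  set C : ℝ := max C0 1 with hCdef
  have hC1 : (1:ℝ) ≤ C := le_max_right _ _
  have hCpos : (0:ℝ) < C := by linarith
  -- squared bound on h
  have hH : ∀ p, ∫⁻ y in ball (0 : Fin m → ℂ) 1, (‖h p y‖₊ : ℝ≥0∞) ^ 2
      ≤ ENNReal.ofReal C ^ 2 := by
    intro p
    rw [← sq_eLpNorm]
    exact pow_le_pow_left' ((hC0 p).trans (ENNReal.ofReal_le_ofReal (le_max_left _ _))) 2
  -- bound and uniform continuity of ψ
  have hKcomp : IsCompact (closedBall (0 : ℂ) 1 ×ˢ closedBall (0 : Fin m → ℂ) 1) :=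
    (isCompact_closedBall _ _).prod (isCompact_closedBall _ _)
  obtain ⟨M0, hM0⟩ := hKcomp.exists_bound_of_continuousOn hψ
  set M : ℝ := max M0 1 with hMdef
  have hM1 : (1:ℝ) ≤ M := le_max_right _ _
  have hMpos : (0:ℝ) < M := by linarith
  have hM : ∀ z ∈ closedBall (0 : ℂ) 1 ×ˢ closedBall (0 : Fin m → ℂ) 1, ‖ψ z‖ ≤ M :=
    fun z hz => (hM0 z hz).trans (le_max_left _ _)
  have hUC := hKcomp.uniformContinuousOn_of_continuous hψ
  rw [Metric.uniformContinuousOn_iff] at hUC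
  -- main
  rw [ENNReal.tendsto_nhds_zero]
  intro ε hε
  set r : ℝ≥0∞ := min ε 1 with hrdef
  have hrne : r ≠ ⊤ := ne_top_of_le_ne_top ENNReal.one_ne_top (min_le_right _ _)
  have hrpos : 0 < r := lt_min hε zero_lt_one
  set e : ℝ := r.toReal with hedef
  have he : 0 < e := ENNReal.toReal_pos hrpos.ne' hrne
  -- constants
  set ε₀ : ℝ := Real.sqrt (e ^ 2 / 2) / C with hε₀def
  have hε₀pos : 0 < ε₀ := by
    apply div_pos (Real.sqrt_pos.2 (by positivity)) hCpos
  obtain ⟨δ, hδpos, hδ⟩ := hUC ε₀ hε₀pos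
  set κ₀ : ℝ := Real.sqrt (e ^ 2 / 2 / Real.pi) / (2 * M * C) with hκ₀def
  have hκ₀pos : 0 < κ₀ := by
    apply div_pos (Real.sqrt_pos.2 (by positivity)) (by positivity)
  set η : ℝ := κ₀ * Real.sqrt Real.pi * δ ^ 2 / 4 with hηdef
  have hηpos : 0 < η := by
    have := Real.sqrt_pos.2 Real.pi_pos
    positivity
  -- filter eventualities
  set l := nhdsWithin (ζ, q') (ball (0 : ℂ) 1 ×ˢ ball (0 : Fin m → ℂ) 1) with hldef
  have hev1 : ∀ᶠ p in l, p ∈ ball (0 : ℂ) 1 ×ˢ ball (0 : Fin m → ℂ) 1 :=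
    eventually_mem_nhdsWithin
  have hev2 : ∀ᶠ p : ℂ × (Fin m → ℂ) in l, dist p.1 ζ < δ / 2 := by
    have ht : Tendsto (fun p : ℂ × (Fin m → ℂ) => dist p.1 ζ) l (𝓝 0) := by
      have hc : Continuous (fun p : ℂ × (Fin m → ℂ) => dist p.1 ζ) :=
        continuous_fst.dist continuous_const
      have := (hc.tendsto (ζ, q')).mono_left
        (nhdsWithin_le_nhds (s := ball (0 : ℂ) 1 ×ˢ ball (0 : Fin m → ℂ) 1))
      simpa using this
    exact ht.eventually_lt_const (by positivity)
  have hev3 : ∀ᶠ p : ℂ × (Fin m → ℂ) in l, 1 - ‖p.1‖ ^ 2 < η := by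
    have hc : Continuous (fun p : ℂ × (Fin m → ℂ) => 1 - ‖p.1‖ ^ 2) :=
      continuous_const.sub (continuous_fst.norm.pow 2)
    have ht : Tendsto (fun p : ℂ × (Fin m → ℂ) => 1 - ‖p.1‖ ^ 2) l (𝓝 0) := by
      have := (hc.tendsto (ζ, q')).mono_left
        (nhdsWithin_le_nhds (s := ball (0 : ℂ) 1 ×ˢ ball (0 : Fin m → ℂ) 1))
      simpa [hζ] using this
    exact ht.eventually_lt_const hηpos
  filter_upwards [hev1, hev2, hev3] with p hpS hp2 hp3
  -- set up
  have hp1 : ‖p.1‖ < 1 := mem_ball_zero_iff.1 hpS.1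
  have hpnn : (0:ℝ) ≤ 1 - ‖p.1‖ ^ 2 := by nlinarith [norm_nonneg p.1]
  set A : Set ℂ := ball (0:ℂ) 1 ∩ ball ζ δ with hAdef
  set B : Set ℂ := ball (0:ℂ) 1 \ ball ζ δ with hBdef
  set T : Set (Fin m → ℂ) := ball (0 : Fin m → ℂ) 1 with hTdef
  set F : ℂ × (Fin m → ℂ) → ℂ := fun z =>
    (ψ z - ψ (ζ, z.2)) * normBergmanKernel p.1 z.1 * h p z.2 with hFdef
  have hprodA : (volume : Measure (ℂ × (Fin m → ℂ))).restrict (A ×ˢ T)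
      = ((volume : Measure ℂ).restrict A).prod ((volume : Measure (Fin m → ℂ)).restrict T) := by
    rw [Measure.volume_eq_prod, Measure.prod_restrict]
  have hprodB : (volume : Measure (ℂ × (Fin m → ℂ))).restrict (B ×ˢ T)
      = ((volume : Measure ℂ).restrict B).prod ((volume : Measure (Fin m → ℂ)).restrict T) := by
    rw [Measure.volume_eq_prod, Measure.prod_restrict]
  have hkm : Measurable (normBergmanKernel p.1) := by unfold normBergmanKernel; fun_prop
  have hhm : AEMeasurable (fun y => (‖h p y‖₊ : ℝ≥0∞) ^ 2) (volume.restrict T) :=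
    (hmeas p).enorm.pow_const 2
  -- near part
  have hnear : ∫⁻ z in A ×ˢ T, (‖F z‖₊ : ℝ≥0∞) ^ 2 ≤ ENNReal.ofReal (e ^ 2 / 2) := by
    have hmono : ∫⁻ z in A ×ˢ T, (‖F z‖₊ : ℝ≥0∞) ^ 2 ≤
        ∫⁻ z in A ×ˢ T, (ENNReal.ofReal ε₀ ^ 2 * (‖normBergmanKernel p.1 z.1‖₊ : ℝ≥0∞) ^ 2)
          * (‖h p z.2‖₊ : ℝ≥0∞) ^ 2 := by
      apply setLIntegral_mono_ae
      · apply AEMeasurable.fun_mul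
        · exact (measurable_const.mul
            (((hkm.comp measurable_fst).enorm).pow_const 2)).aemeasurable
        · rw [hprodA]
          exact hhm.comp_quasiMeasurePreserving Measure.quasiMeasurePreserving_snd
      · apply Filter.Eventually.of_forall
        intro z hz
        have hz1 : z.1 ∈ A := hz.1
        have hz2 : z.2 ∈ T := hz.2
        have hz1b : ‖z.1‖ < 1 := mem_ball_zero_iff.1 hz1.1
        have hz1δ : dist z.1 ζ < δ := mem_ball.1 hz1.2
        have hz2b : ‖z.2‖ < 1 := mem_ball_zero_iff.1 hz2
        have hmemK1 : z ∈ closedBall (0 : ℂ) 1 ×ˢ closedBall (0 : Fin m → ℂ) 1 :=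
          ⟨ball_subset_closedBall hz1.1, ball_subset_closedBall hz2⟩
        have hmemK2 : ((ζ, z.2) : ℂ × (Fin m → ℂ)) ∈
            closedBall (0 : ℂ) 1 ×ˢ closedBall (0 : Fin m → ℂ) 1 :=
          ⟨mem_closedBall_zero_iff.2 hζ.le, ball_subset_closedBall hz2⟩
        have hdistp : dist z (ζ, z.2) = dist z.1 ζ := by
          rw [Prod.dist_eq]
          simp [max_eq_left dist_nonneg]
        have hψb : ‖ψ z - ψ (ζ, z.2)‖ ≤ ε₀ := by
          have := hδ z hmemK1 (ζ, z.2) hmemK2 (by rw [hdistp]; exact hz1δ)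
          rw [dist_eq_norm] at this
          exact this.le
        have hnorm : ‖F z‖ ≤ ε₀ * (‖normBergmanKernel p.1 z.1‖ * ‖h p z.2‖) := by
          rw [hFdef]
          simp only [norm_mul]
          rw [← mul_assoc]
          gcongr
        calc (‖F z‖₊ : ℝ≥0∞) ^ 2 = ENNReal.ofReal ‖F z‖ ^ 2 := by
              rw [ofReal_norm, enorm_eq_nnnorm]
          _ ≤ ENNReal.ofReal (ε₀ * (‖normBergmanKernel p.1 z.1‖ * ‖h p z.2‖)) ^ 2 := by
              exact pow_le_pow_left' (ENNReal.ofReal_le_ofReal hnorm) 2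
          _ = (ENNReal.ofReal ε₀ ^ 2 * (‖normBergmanKernel p.1 z.1‖₊ : ℝ≥0∞) ^ 2)
              * (‖h p z.2‖₊ : ℝ≥0∞) ^ 2 := by
              rw [ENNReal.ofReal_mul hε₀pos.le, ENNReal.ofReal_mul (norm_nonneg _),
                ofReal_norm, ofReal_norm, enorm_eq_nnnorm, enorm_eq_nnnorm]
              ring
    refine hmono.trans ?_
    rw [hprodA]
    rw [lintegral_prod_mul (f := fun z1 : ℂ =>
        ENNReal.ofReal ε₀ ^ 2 * (‖normBergmanKernel p.1 z1‖₊ : ℝ≥0∞) ^ 2)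
      (g := fun y => (‖h p y‖₊ : ℝ≥0∞) ^ 2)
      (measurable_const.mul ((hkm.enorm).pow_const 2)).aemeasurable hhm]
    have hk1 : ∫⁻ z1 in A, ENNReal.ofReal ε₀ ^ 2 * (‖normBergmanKernel p.1 z1‖₊ : ℝ≥0∞) ^ 2
        ≤ ENNReal.ofReal ε₀ ^ 2 := by
      rw [lintegral_const_mul (f := fun z1 => (‖normBergmanKernel p.1 z1‖₊ : ℝ≥0∞) ^ 2) _
        ((hkm.enorm).pow_const 2)]
      calc ENNReal.ofReal ε₀ ^ 2 * ∫⁻ z1 in A, (‖normBergmanKernel p.1 z1‖₊ : ℝ≥0∞) ^ 2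
          ≤ ENNReal.ofReal ε₀ ^ 2 * 1 := by
            apply mul_le_mul_right
            exact (lintegral_mono_set Set.inter_subset_left).trans
              (kernel_lintegral_le p.1 hp1)
        _ = ENNReal.ofReal ε₀ ^ 2 := mul_one _
    calc (∫⁻ z1 in A, ENNReal.ofReal ε₀ ^ 2 * (‖normBergmanKernel p.1 z1‖₊ : ℝ≥0∞) ^ 2)
          * ∫⁻ y in T, (‖h p y‖₊ : ℝ≥0∞) ^ 2
        ≤ ENNReal.ofReal ε₀ ^ 2 * ENNReal.ofReal C ^ 2 := mul_le_mul' hk1 (hH p)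
      _ = ENNReal.ofReal (e ^ 2 / 2) := by
          rw [← mul_pow, ← ENNReal.ofReal_mul hε₀pos.le, ← ENNReal.ofReal_pow (by positivity)]
          congr 1
          have h1 : ε₀ * C = Real.sqrt (e ^ 2 / 2) := by
            rw [hε₀def, div_mul_cancel₀ _ hCpos.ne']
          rw [h1, Real.sq_sqrt (by positivity)]
  -- far part
  have hκp : (1 - ‖p.1‖ ^ 2) * 4 / (Real.sqrt Real.pi * δ ^ 2) ≤ κ₀ := by
    have hsp : (0:ℝ) < Real.sqrt Real.pi := Real.sqrt_pos.2 Real.pi_pos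
    rw [div_le_iff₀ (by positivity)]
    calc (1 - ‖p.1‖ ^ 2) * 4 ≤ η * 4 := by linarith
      _ = κ₀ * (Real.sqrt Real.pi * δ ^ 2) := by rw [hηdef]; ring
  have hκ0nn : (0:ℝ) ≤ κ₀ := hκ₀pos.le
  have hfar : ∫⁻ z in B ×ˢ T, (‖F z‖₊ : ℝ≥0∞) ^ 2 ≤ ENNReal.ofReal (e ^ 2 / 2) := by
    have hmono : ∫⁻ z in B ×ˢ T, (‖F z‖₊ : ℝ≥0∞) ^ 2 ≤
        ∫⁻ z in B ×ˢ T, (ENNReal.ofReal (2 * M * κ₀)) ^ 2 * (‖h p z.2‖₊ : ℝ≥0∞) ^ 2 := by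
      apply setLIntegral_mono_ae
      · apply AEMeasurable.fun_mul
        · exact measurable_const.aemeasurable
        · rw [hprodB]
          exact hhm.comp_quasiMeasurePreserving Measure.quasiMeasurePreserving_snd
      · apply Filter.Eventually.of_forall
        intro z hz
        have hz1 : z.1 ∈ B := hz.1
        have hz2 : z.2 ∈ T := hz.2
        have hz1b : ‖z.1‖ < 1 := mem_ball_zero_iff.1 hz1.1
        have hz2b : ‖z.2‖ < 1 := mem_ball_zero_iff.1 hz2
        have hzfar : δ ≤ ‖z.1 - ζ‖ := by
          have := hz1.2
          rw [mem_ball] at this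
          rw [← dist_eq_norm]
          exact le_of_not_gt this
        have hψb : ‖ψ z - ψ (ζ, z.2)‖ ≤ 2 * M := by
          have h1 : ‖ψ z‖ ≤ M := hM z ⟨ball_subset_closedBall hz1.1, ball_subset_closedBall hz2⟩
          have h2 : ‖ψ (ζ, z.2)‖ ≤ M :=
            hM _ ⟨mem_closedBall_zero_iff.2 hζ.le, ball_subset_closedBall hz2⟩
          calc ‖ψ z - ψ (ζ, z.2)‖ ≤ ‖ψ z‖ + ‖ψ (ζ, z.2)‖ := norm_sub_le _ _
            _ ≤ 2 * M := by linarith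
        have hkb : ‖normBergmanKernel p.1 z.1‖ ≤ κ₀ := by
          refine (kernel_far p.1 ζ z.1 hζ δ hδpos ?_ hp1.le hz1b.le hzfar).trans hκp
          rw [← dist_eq_norm]
          exact hp2.le
        have hnorm : ‖F z‖ ≤ (2 * M * κ₀) * ‖h p z.2‖ := by
          rw [hFdef]
          simp only [norm_mul]
          have : ‖ψ z - ψ (ζ, z.2)‖ * ‖normBergmanKernel p.1 z.1‖ ≤ 2 * M * κ₀ := by
            apply mul_le_mul hψb hkb (norm_nonneg _) (by positivity)
          exact mul_le_mul_of_nonneg_right this (norm_nonneg _)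
        calc (‖F z‖₊ : ℝ≥0∞) ^ 2 = ENNReal.ofReal ‖F z‖ ^ 2 := by
              rw [ofReal_norm, enorm_eq_nnnorm]
          _ ≤ ENNReal.ofReal ((2 * M * κ₀) * ‖h p z.2‖) ^ 2 :=
              pow_le_pow_left' (ENNReal.ofReal_le_ofReal hnorm) 2
          _ = (ENNReal.ofReal (2 * M * κ₀)) ^ 2 * (‖h p z.2‖₊ : ℝ≥0∞) ^ 2 := by
              rw [ENNReal.ofReal_mul (by positivity), ofReal_norm, enorm_eq_nnnorm]
              ring
    refine hmono.trans ?_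
    rw [hprodB]
    rw [lintegral_prod_mul (f := fun _ : ℂ => (ENNReal.ofReal (2 * M * κ₀)) ^ 2)
      (g := fun y => (‖h p y‖₊ : ℝ≥0∞) ^ 2) measurable_const.aemeasurable hhm]
    have hvolB : volume B ≤ ENNReal.ofReal Real.pi := by
      calc volume B ≤ volume (ball (0:ℂ) 1) := measure_mono Set.diff_subset
        _ = ENNReal.ofReal Real.pi := by
            rw [Complex.volume_ball, ← NNReal.coe_real_pi, ENNReal.ofReal_coe_nnreal]
            simp
    have hconst : ∫⁻ _ in B, (ENNReal.ofReal (2 * M * κ₀)) ^ 2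
        = (ENNReal.ofReal (2 * M * κ₀)) ^ 2 * volume B := setLIntegral_const _ _
    rw [hconst]
    calc (ENNReal.ofReal (2 * M * κ₀)) ^ 2 * volume B * ∫⁻ y in T, (‖h p y‖₊ : ℝ≥0∞) ^ 2
        ≤ (ENNReal.ofReal (2 * M * κ₀)) ^ 2 * ENNReal.ofReal Real.pi * ENNReal.ofReal C ^ 2 := by
          exact mul_le_mul' (mul_le_mul_right hvolB _) (hH p)
      _ = ENNReal.ofReal ((2 * M * κ₀) ^ 2 * Real.pi * C ^ 2) := by
          rw [← ENNReal.ofReal_pow (by positivity : (0:ℝ) ≤ 2 * M * κ₀),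
            ← ENNReal.ofReal_pow hCpos.le,
            ← ENNReal.ofReal_mul (by positivity), ← ENNReal.ofReal_mul (by positivity)]
      _ = ENNReal.ofReal (e ^ 2 / 2) := by
          congr 1
          have h1 : 2 * M * κ₀ * C = Real.sqrt (e ^ 2 / 2 / Real.pi) := by
            rw [hκ₀def]
            field_simp
          calc (2 * M * κ₀) ^ 2 * Real.pi * C ^ 2 = (2 * M * κ₀ * C) ^ 2 * Real.pi := by ring
            _ = (e ^ 2 / 2 / Real.pi) * Real.pi := by
                rw [h1, Real.sq_sqrt (by positivity)]
            _ = e ^ 2 / 2 := by field_simp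
  -- combine
  have hsum : ∫⁻ z in ball (0:ℂ) 1 ×ˢ T, (‖F z‖₊ : ℝ≥0∞) ^ 2 ≤ ENNReal.ofReal (e ^ 2) := by
    have hunion : (ball (0:ℂ) 1) ×ˢ T = (A ×ˢ T) ∪ (B ×ˢ T) := by
      rw [← Set.union_prod, hAdef, hBdef, Set.inter_union_diff]
    rw [hunion]
    calc ∫⁻ z in (A ×ˢ T) ∪ (B ×ˢ T), (‖F z‖₊ : ℝ≥0∞) ^ 2
        ≤ (∫⁻ z in A ×ˢ T, (‖F z‖₊ : ℝ≥0∞) ^ 2) + ∫⁻ z in B ×ˢ T, (‖F z‖₊ : ℝ≥0∞) ^ 2 :=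
          lintegral_union_le _ _ _
      _ ≤ ENNReal.ofReal (e ^ 2 / 2) + ENNReal.ofReal (e ^ 2 / 2) := add_le_add hnear hfar
      _ = ENNReal.ofReal (e ^ 2) := by
          rw [← ENNReal.ofReal_add (by positivity) (by positivity)]
          norm_num
  have hfin : eLpNorm F 2 (volume.restrict (ball (0:ℂ) 1 ×ˢ T)) ≤ ENNReal.ofReal e := by
    apply ennreal_le_of_sq_le_sq
    rw [sq_eLpNorm]
    calc ∫⁻ z, (‖F z‖₊ : ℝ≥0∞) ^ 2 ∂(volume.restrict (ball (0:ℂ) 1 ×ˢ T))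
        ≤ ENNReal.ofReal (e ^ 2) := hsum
      _ = ENNReal.ofReal e ^ 2 := by rw [ENNReal.ofReal_pow he.le]
  calc eLpNorm F 2 (volume.restrict (ball (0:ℂ) 1 ×ˢ T)) ≤ ENNReal.ofReal e := hfin
    _ = r := ENNReal.ofReal_toReal hrne
    _ ≤ ε := min_le_left _ _
end
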